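/- The group generated by the automorphisms φ_U, φ_{U'}, φ_v acts transitively on the boundary ∂D_{n,m}(μ) = {(z,w) : ‖w‖² = exp(-μ‖z‖²)}: for any two boundary points p, q there is a composition of such maps sending p to q. -/

import Mathlib

open scoped ComplexConjugate

lemma myExistsONB (m : ℕ) (hm : 1 ≤ m) (x : EuclideanSpace ℂ (Fin m)) (hx : ‖x‖ = 1) :
    ∃ b : OrthonormalBasis (Fin m) ℂ (EuclideanSpace ℂ (Fin m)), b ⟨0, hm⟩ = x := by
  have card : Module.finrank ℂ (EuclideanSpace ℂ (Fin m)) = Fintype.card (Fin m) := by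
    simp
  have horth : Orthonormal ℂ (Set.restrict {(⟨0, hm⟩ : Fin m)} (fun _ => x)) := by
    constructor
    · intro i; exact hx
    · intro i j hij
      exact absurd (Subtype.ext (by
        have hi := i.2; have hj := j.2
        simp only [Set.mem_singleton_iff] at hi hj
        rw [hi, hj])) hij
  obtain ⟨b, hb⟩ := horth.exists_orthonormalBasis_extension_of_card_eq card
  exact ⟨b, hb _ rfl⟩

lemma myExistsUnitary (m : ℕ) (hm : 1 ≤ m) (x y : EuclideanSpace ℂ (Fin m))
    (hx : x ≠ 0) (hy : y ≠ 0) (h : ‖x‖ = ‖y‖) :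
    ∃ U ∈ Matrix.unitaryGroup (Fin m) ℂ, U.mulVec x = y := by
  have hnx : ‖x‖ ≠ 0 := norm_ne_zero_iff.mpr hx
  have hny : ‖y‖ ≠ 0 := norm_ne_zero_iff.mpr hy
  obtain ⟨b, hb⟩ := myExistsONB m hm ((‖x‖⁻¹ : ℂ) • x) (by
    simp [norm_smul, inv_mul_cancel₀ hnx])
  obtain ⟨c, hc⟩ := myExistsONB m hm ((‖y‖⁻¹ : ℂ) • y) (by
    simp [norm_smul, inv_mul_cancel₀ hny])
  let f : EuclideanSpace ℂ (Fin m) ≃ₗᵢ[ℂ] EuclideanSpace ℂ (Fin m) :=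
    b.repr.trans c.repr.symm
  have hfx : f x = y := by
    have h1 : f ((‖x‖⁻¹ : ℂ) • x) = (‖y‖⁻¹ : ℂ) • y := by
      rw [← hb, ← hc]
      show c.repr.symm (b.repr (b _)) = c _
      rw [b.repr_self, ← c.repr_self, c.repr.symm_apply_apply]
    have h2 : f x = f ((‖x‖ : ℂ) • ((‖x‖⁻¹ : ℂ) • x)) := by
      rw [smul_smul, mul_inv_cancel₀ (by exact_mod_cast hnx), one_smul]
    rw [h2, f.map_smul, h1, h, smul_smul, mul_inv_cancel₀ (by exact_mod_cast hny), one_smul]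
  set std := EuclideanSpace.basisFun (Fin m) ℂ
  refine ⟨LinearMap.toMatrix std.toBasis std.toBasis f.toLinearEquiv.toLinearMap, ?_, ?_⟩
  · have heq : LinearMap.toMatrix std.toBasis std.toBasis f.toLinearEquiv.toLinearMap
        = std.toBasis.toMatrix ⇑(std.map f) := by
      ext i j
      simp [LinearMap.toMatrix_apply, Module.Basis.toMatrix_apply]
    rw [heq]
    exact std.toMatrix_orthonormalBasis_mem_unitary (std.map f)
  · have := Matrix.toEuclideanLin_eq_toLin_orthonormal (𝕜 := ℂ) (m := Fin m) (n := Fin m)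
    have h3 : Matrix.toEuclideanLin
        (LinearMap.toMatrix std.toBasis std.toBasis f.toLinearEquiv.toLinearMap) x = f x := by
      rw [this, Matrix.toLin_toMatrix]; rfl
    rw [← hfx, ← h3]
    rfl

/-- The group generated by `φ_U`, `φ_{U'}`, `φ_v` acts transitively on the boundary
`∂D_{n,m}(μ) = {(z,w) : ‖w‖² = exp(-μ‖z‖²)}`: for any boundary points `p, q` there are
`v ∈ ℂⁿ`, `U ∈ U(n)`, `U' ∈ U(m)` with `(φ_{U'} ∘ φ_U ∘ φ_v)(p) = q`. -/
theorem stmt4 (n m : ℕ) (hn : 1 ≤ n) (hm : 1 ≤ m) (μ : ℝ) (hμ : 0 < μ)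
    (bD : Set (EuclideanSpace ℂ (Fin n) × EuclideanSpace ℂ (Fin m)))
    (hbD : bD = {p | ‖p.2‖ ^ 2 = Real.exp (-μ * ‖p.1‖ ^ 2)}) :
    ∀ p ∈ bD, ∀ q ∈ bD,
      ∃ (v : EuclideanSpace ℂ (Fin n)) (U : Matrix (Fin n) (Fin n) ℂ)
        (U' : Matrix (Fin m) (Fin m) ℂ),
        U ∈ Matrix.unitaryGroup (Fin n) ℂ ∧ U' ∈ Matrix.unitaryGroup (Fin m) ℂ ∧
        (fun r : EuclideanSpace ℂ (Fin n) × EuclideanSpace ℂ (Fin m) =>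
            (r.1, (WithLp.toLp 2 (U'.mulVec r.2) : EuclideanSpace ℂ (Fin m))))
          ((fun r : EuclideanSpace ℂ (Fin n) × EuclideanSpace ℂ (Fin m) =>
            ((WithLp.toLp 2 (U.mulVec r.1) : EuclideanSpace ℂ (Fin n)), r.2))
          ((fun r : EuclideanSpace ℂ (Fin n) × EuclideanSpace ℂ (Fin m) =>
            (r.1 + v, Complex.exp (-(μ : ℂ) * (inner ℂ v r.1 : ℂ)
              - (μ / 2 : ℂ) * (‖v‖ ^ 2 : ℝ)) • r.2)) p)) = q := by
  subst hbD
  intro p hp q hq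
  simp only [Set.mem_setOf_eq] at hp hq
  set v : EuclideanSpace ℂ (Fin n) := q.1 - p.1 with hv
  set c : ℂ := Complex.exp (-(μ : ℂ) * (inner ℂ v p.1 : ℂ) - (μ / 2 : ℂ) * (‖v‖ ^ 2 : ℝ)) with hc
  have hpv : p.1 + v = q.1 := by rw [hv]; abel
  -- norm of c
  have hcabs : ‖c‖ = Real.exp (-μ * (inner ℂ v p.1 : ℂ).re - μ / 2 * ‖v‖ ^ 2) := by
    rw [hc, Complex.norm_exp]
    congr 1
    simp [Complex.sub_re, Complex.mul_re, ← Complex.ofReal_pow]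
  have hnorm : ‖c • p.2‖ = ‖q.2‖ := by
    have h1 : ‖c • p.2‖ ^ 2 = ‖q.2‖ ^ 2 := by
      rw [norm_smul, mul_pow, hcabs, hp, hq, ← Real.exp_nat_mul, ← Real.exp_add, ← hpv,
        @norm_add_sq ℂ _ _ _ _ p.1 v]
      congr 1
      have : (inner ℂ v p.1 : ℂ).re = (inner ℂ p.1 v : ℂ).re := by
        rw [← inner_conj_symm p.1 v, Complex.conj_re]
      rw [this, show (RCLike.re (inner ℂ p.1 v : ℂ)) = (inner ℂ p.1 v : ℂ).re from rfl]
      ring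
    calc ‖c • p.2‖ = Real.sqrt (‖c • p.2‖ ^ 2) := (Real.sqrt_sq (norm_nonneg _)).symm
      _ = Real.sqrt (‖q.2‖ ^ 2) := by rw [h1]
      _ = ‖q.2‖ := Real.sqrt_sq (norm_nonneg _)
  have hp2 : p.2 ≠ 0 := by
    intro h0
    rw [h0] at hp
    simp at hp
    exact (Real.exp_pos _).ne' hp.symm
  have hcne : c ≠ 0 := Complex.exp_ne_zero _
  have hx : c • p.2 ≠ 0 := smul_ne_zero hcne hp2
  have hq2 : q.2 ≠ 0 := by
    intro h0
    rw [h0] at hq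
    simp at hq
    exact (Real.exp_pos _).ne' hq.symm
  obtain ⟨U', hU', hU'x⟩ := myExistsUnitary m hm (c • p.2) q.2 hx hq2 hnorm
  refine ⟨v, 1, U', one_mem _, hU', ?_⟩
  simp only
  rw [Matrix.one_mulVec]
  exact Prod.ext hpv (congrArg (WithLp.toLp 2) hU'x)
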